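/- arXiv:1805.03662 — 6 statements merged into one kernel-verified Lean document; each statement's English description precedes it below -/
import Mathlib

section
/- With the qubitization setup (S a linear involution, P linear with P ψ = ψ and P (S ψ) = (e : ℂ) • ψ, |e| < 1, s = √(1 − e²), φ = (s : ℂ)⁻¹ • (S ψ − (e : ℂ) • ψ), and walk operator W = (2 • P − id) ∘ S), the two-dimensional span of ψ and φ is invariant under W, and in the basis (ψ, φ) the walk operator acts by the rotation matrix [[e, s], [−s, e]]; explicitly, W ψ = (e : ℂ) • ψ − (s : ℂ) • φ and W φ = (s : ℂ) • ψ + (e : ℂ) • φ. -/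
theorem walk_rotation_on_invariant_subspace
    {V : Type*} [AddCommGroup V] [Module ℂ V]
    (S P : V →ₗ[ℂ] V)
    (hS : ∀ x : V, S (S x) = x)
    (ψ : V) (e : ℝ) (he : |e| < 1)
    (hPψ : P ψ = ψ) (hPSψ : P (S ψ) = (e : ℂ) • ψ) :
    let s : ℝ := Real.sqrt (1 - e ^ 2)
    let φ : V := (s : ℂ)⁻¹ • (S ψ - (e : ℂ) • ψ)
    let W : V →ₗ[ℂ] V := (2 • P - LinearMap.id) ∘ₗ S
    (∀ v ∈ Submodule.span ℂ ({ψ, φ} : Set V), W v ∈ Submodule.span ℂ ({ψ, φ} : Set V)) ∧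
    W ψ = (e : ℂ) • ψ - (s : ℂ) • φ ∧
    W φ = (s : ℂ) • ψ + (e : ℂ) • φ := by
  intro s φ W
  have hpos : 0 < 1 - e ^ 2 := by nlinarith [abs_nonneg e, sq_abs e, abs_lt.mp he]
  have hs : s ≠ 0 := ne_of_gt (Real.sqrt_pos.mpr hpos)
  have hsC : (s : ℂ) ≠ 0 := by exact_mod_cast hs
  have hs2 : (s : ℂ) ^ 2 = 1 - (e : ℂ) ^ 2 := by
    have : s ^ 2 = 1 - e ^ 2 := Real.sq_sqrt hpos.le
    have := congrArg (Complex.ofReal) this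
    push_cast at this
    linear_combination this
  have hsφ : (s : ℂ) • φ = S ψ - (e : ℂ) • ψ := smul_inv_smul₀ hsC _
  have hSψ : S ψ = (s : ℂ) • φ + (e : ℂ) • ψ := by rw [hsφ]; abel
  have hWψ : W ψ = (e : ℂ) • ψ - (s : ℂ) • φ := by
    have : W ψ = (2 : ℕ) • P (S ψ) - S ψ := by
      simp [W, LinearMap.comp_apply, LinearMap.sub_apply, LinearMap.smul_apply]
    rw [this, hPSψ, hSψ]
    module
  have hWSψ : W (S ψ) = ψ := by
    have : W (S ψ) = (2 : ℕ) • P (S (S ψ)) - S (S ψ) := by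
      simp [W, LinearMap.comp_apply, LinearMap.sub_apply, LinearMap.smul_apply]
    rw [this, hS, hPψ]
    simp [two_smul]
  have hWφ : W φ = (s : ℂ) • ψ + (e : ℂ) • φ := by
    have : W φ = (s : ℂ)⁻¹ • (W (S ψ) - (e : ℂ) • W ψ) := by
      simp [φ, map_smul, map_sub]
    rw [this, hWSψ, hWψ]
    have h1 : ψ - (e : ℂ) • ((e : ℂ) • ψ - (s : ℂ) • φ)
        = ((s : ℂ) ^ 2) • ψ + ((e : ℂ) * (s : ℂ)) • φ := by
      rw [hs2]; module
    rw [h1, smul_add, smul_smul, smul_smul]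
    congr 1
    · congr 1
      field_simp
    · congr 1
      field_simp
  refine ⟨?_, hWψ, hWφ⟩
  intro v hv
  have hmemψ : ψ ∈ Submodule.span ℂ ({ψ, φ} : Set V) :=
    Submodule.subset_span (by simp)
  have hmemφ : φ ∈ Submodule.span ℂ ({ψ, φ} : Set V) :=
    Submodule.subset_span (by simp)
  induction hv using Submodule.span_induction with
  | mem x hx =>
    rcases hx with h | h
    · subst h; rw [hWψ]; exact sub_mem (Submodule.smul_mem _ _ hmemψ) (Submodule.smul_mem _ _ hmemφ)
    · simp at h; subst h; rw [hWφ]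
      exact add_mem (Submodule.smul_mem _ _ hmemψ) (Submodule.smul_mem _ _ hmemφ)
  | zero => simp
  | add x y _ _ hx hy => rw [map_add]; exact add_mem hx hy
  | smul c x _ hx => rw [map_smul]; exact Submodule.smul_mem _ _ hx
end

section
/- With the qubitization setup (S a linear involution, P linear with P ψ = ψ and P (S ψ) = (e : ℂ) • ψ, |e| < 1, s = √(1 − e²), φ = (s : ℂ)⁻¹ • (S ψ − (e : ℂ) • ψ), and walk operator W = (2 • P − id) ∘ S), the vectors ψ + i • φ and ψ − i • φ are eigenvectors of W with eigenvalues exp(i · arccos e) and exp(−i · arccos e) respectively: W (ψ + Complex.I • φ) = Complex.exp (Complex.I * Real.arccos e) • (ψ + Complex.I • φ) and W (ψ − Complex.I • φ) = Complex.exp (−Complex.I * Real.arccos e) • (ψ − Complex.I • φ). (This is the statement that the eigenphases of the walk operator are ± arccos(E_k/λ).) -/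
theorem walk_eigenvectors_eigenphases
    {V : Type*} [AddCommGroup V] [Module ℂ V]
    (S P : V →ₗ[ℂ] V)
    (hS : ∀ x : V, S (S x) = x)
    (ψ : V) (e : ℝ) (he : |e| < 1)
    (hPψ : P ψ = ψ) (hPSψ : P (S ψ) = (e : ℂ) • ψ) :
    let s : ℝ := Real.sqrt (1 - e ^ 2)
    let φ : V := (s : ℂ)⁻¹ • (S ψ - (e : ℂ) • ψ)
    let W : V →ₗ[ℂ] V := (2 • P - LinearMap.id) ∘ₗ S
    W (ψ + Complex.I • φ) = Complex.exp (Complex.I * Real.arccos e) • (ψ + Complex.I • φ) ∧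
    W (ψ - Complex.I • φ) = Complex.exp (-Complex.I * Real.arccos e) • (ψ - Complex.I • φ) := by
  intro s φ W
  have he1 : -1 ≤ e := by cases abs_lt.mp he; linarith
  have he2 : e ≤ 1 := by cases abs_lt.mp he; linarith
  have hpos : (0:ℝ) < 1 - e ^ 2 := by
    have := abs_lt.mp he
    nlinarith [this.1, this.2]
  have hs2 : s ^ 2 = 1 - e ^ 2 := Real.sq_sqrt hpos.le
  have hsne : (s : ℂ) ≠ 0 := by
    exact_mod_cast (Real.sqrt_pos.mpr hpos).ne'
  have hs2c : (s : ℂ) ^ 2 = 1 - (e : ℂ) ^ 2 := by exact_mod_cast hs2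
  have hexp : Complex.exp (Complex.I * Real.arccos e) = (e : ℂ) + (s : ℂ) * Complex.I := by
    rw [mul_comm, Complex.exp_mul_I, ← Complex.ofReal_cos, ← Complex.ofReal_sin,
      Real.cos_arccos he1 he2, Real.sin_arccos]
  have hexp' : Complex.exp (-Complex.I * Real.arccos e) = (e : ℂ) - (s : ℂ) * Complex.I := by
    rw [neg_mul, mul_comm, ← neg_mul, Complex.exp_mul_I, Complex.cos_neg, Complex.sin_neg,
      ← Complex.ofReal_cos, ← Complex.ofReal_sin, Real.cos_arccos he1 he2, Real.sin_arccos]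
    ring
  have hsφ : (s:ℂ) • φ = S ψ - (e:ℂ) • ψ := by
    show (s:ℂ) • (s:ℂ)⁻¹ • (S ψ - (e:ℂ) • ψ) = _
    rw [smul_smul, mul_inv_cancel₀ hsne, one_smul]
  have hSψ2 : S ψ = (e:ℂ) • ψ + (s:ℂ) • φ := by rw [hsφ]; abel
  have hSφ2 : S φ = (s:ℂ) • ψ - (e:ℂ) • φ := by
    have h1 : S φ = (s:ℂ)⁻¹ • (ψ - (e:ℂ) • S ψ) := by
      simp [φ, map_smul, map_sub, hS]
    rw [h1, hSψ2]
    match_scalars <;> field_simp <;> first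
      | linear_combination (-(s:ℂ)^2) * hs2c
      | linear_combination (-(s:ℂ)^2 - 1) * hs2c
      | linear_combination hs2c
      | linear_combination (-1) * hs2c
  have hPφ : P φ = 0 := by
    simp [φ, map_smul, map_sub, hPψ, hPSψ]
  have hWψ : W ψ = (e:ℂ) • ψ - (s:ℂ) • φ := by
    simp only [W, LinearMap.coe_comp, Function.comp_apply, LinearMap.sub_apply, LinearMap.smul_apply, LinearMap.id_apply, hPSψ]
    rw [hSψ2]
    module
  have hWφ : W φ = (s:ℂ) • ψ + (e:ℂ) • φ := by
    simp only [W, LinearMap.coe_comp, Function.comp_apply, LinearMap.sub_apply, LinearMap.smul_apply, LinearMap.id_apply]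
    rw [hSφ2]
    simp only [map_sub, map_smul, hPψ, hPφ]
    module
  constructor
  · rw [hexp, map_add, map_smul, hWψ, hWφ]
    match_scalars <;> field_simp <;> first
      | linear_combination ((s:ℂ)*(e:ℂ)) * Complex.I_sq
      | linear_combination (-(s:ℂ)) * Complex.I_sq
  · rw [hexp', map_sub, map_smul, hWψ, hWφ]
    match_scalars <;> field_simp <;> first
      | linear_combination ((s:ℂ)*(e:ℂ)) * Complex.I_sq
      | linear_combination (-(s:ℂ)) * Complex.I_sq
end

section
/- Let L and n be positive natural numbers, let w : Fin L → ℝ satisfy 0 ≤ w ℓ for all ℓ, set Λ := ∑ ℓ, w ℓ and assume 0 < Λ. Let Hm : Fin L → Matrix (Fin n) (Fin n) ℂ, define the amplitude vector v : Fin L → ℂ by v ℓ = (Real.sqrt (w ℓ / Λ) : ℂ), the selection matrix SELECT := ∑ ℓ, (Matrix.stdBasisMatrix ℓ ℓ (1 : ℂ)) ⊗ₖ Hm ℓ (a matrix indexed by Fin L × Fin n), and the isometry B := (Matrix.col Unit v) ⊗ₖ (1 : Matrix (Fin n) (Fin n) ℂ). Then Bᴴ * SELECT * B, after reindexing along the canonical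 equivalence Unit × Fin n ≃ Fin n, equals Λ⁻¹ • ∑ ℓ, (w ℓ : ℂ) • Hm ℓ. (This is Eq. (5): (⟨L| ⊗ 𝟙) SELECT (|L⟩ ⊗ 𝟙) = H/λ, the block encoding of H by the qubitization oracles.) -/
open Kronecker Matrix

theorem block_encoding_of_select
    (L n : ℕ) (hL : 0 < L) (hn : 0 < n)
    (w : Fin L → ℝ) (hw : ∀ ℓ, 0 ≤ w ℓ)
    (Λ : ℝ) (hΛdef : Λ = ∑ ℓ, w ℓ) (hΛ : 0 < Λ)
    (Hm : Fin L → Matrix (Fin n) (Fin n) ℂ) :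
    let v : Fin L → ℂ := fun ℓ => (Real.sqrt (w ℓ / Λ) : ℂ)
    let SELECT : Matrix (Fin L × Fin n) (Fin L × Fin n) ℂ :=
      ∑ ℓ, (Matrix.single ℓ ℓ (1 : ℂ)) ⊗ₖ Hm ℓ
    let B : Matrix (Fin L × Fin n) (Unit × Fin n) ℂ :=
      (Matrix.replicateCol Unit v) ⊗ₖ (1 : Matrix (Fin n) (Fin n) ℂ)
    Matrix.reindex (Equiv.punitProd (Fin n)) (Equiv.punitProd (Fin n))
        (Bᴴ * SELECT * B)
      = (Λ : ℂ)⁻¹ • ∑ ℓ, (w ℓ : ℂ) • Hm ℓ := by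
  intro v SELECT B
  ext i j
  simp only [reindex_apply, submatrix_apply, Equiv.punitProd_symm_apply, mul_apply,
    conjTranspose_apply, Finset.sum_apply, Matrix.sum_apply, kroneckerMap_apply,
    Matrix.smul_apply, Finset.smul_sum, B, SELECT, v, replicateCol_apply, one_apply,
    single, of_apply, Fintype.sum_prod_type, ite_and, mul_ite, ite_mul,
    mul_zero, zero_mul, mul_one, one_mul, Finset.sum_ite_eq, Finset.sum_ite_eq',
    Finset.mem_univ, if_true, Complex.star_def, Complex.conj_ofReal]
  refine Finset.sum_congr rfl fun ℓ _ => ?_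
  simp only [apply_ite (starRingEnd ℂ), map_zero, Complex.conj_ofReal, ite_mul, zero_mul,
    Finset.sum_ite_eq, Finset.sum_ite_eq', Finset.sum_ite_irrel, Finset.sum_const_zero,
    Finset.mem_univ, if_true]
  rw [mul_comm, ← mul_assoc, ← Complex.ofReal_mul,
    Real.mul_self_sqrt (div_nonneg (hw ℓ) hΛ.le)]
  simp only [smul_eq_mul]
  push_cast
  ring
end

section
/- Let n and K be positive natural numbers and let q : Fin n → ℕ satisfy ∑ i, q i = n * K. Then there exist functions alt : Fin n → Fin n and keep : Fin n → ℕ with keep i ≤ K for every i, such that for every ℓ : Fin n, keep ℓ + ∑_{k ∈ {k : alt k = ℓ}} (K − keep k) = q ℓ. (This is the correctness of the alias-sampling state-preparation scheme, Eq. (43): the precomputed alt_ℓ and keep_ℓ data reproduce the target discretized probabilities w̃_ℓ/λ = q_ℓ/(nK).) -/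
open Finset

lemma alias_aux (n K : ℕ) (hK : 0 < K) :
    ∀ S : Finset (Fin n), ∀ q : Fin n → ℕ, (∑ i ∈ S, q i = S.card * K) →
    ∃ (alt : Fin n → Fin n) (keep : Fin n → ℕ),
      (∀ i ∈ S, alt i ∈ S) ∧ (∀ i ∈ S, keep i ≤ K) ∧
      ∀ ℓ ∈ S, keep ℓ + ∑ k ∈ S.filter (fun k => alt k = ℓ), (K - keep k) = q ℓ := by
  intro S
  induction S using Finset.strongInduction with
  | _ S ih =>
    intro q hq
    rcases S.eq_empty_or_nonempty with rfl | hS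
    · exact ⟨id, fun _ => 0, by simp, by simp, by simp⟩
    · obtain ⟨ℓ, hℓS, hℓ⟩ : ∃ ℓ ∈ S, q ℓ ≤ K := by
        apply Finset.exists_le_of_sum_le hS
        rw [hq, Finset.sum_const, smul_eq_mul]
      set S' := S.erase ℓ with hS'
      have hℓS' : ℓ ∉ S' := Finset.notMem_erase ℓ S
      have hins : insert ℓ S' = S := Finset.insert_erase hℓS
      have hcard : S'.card + 1 = S.card := Finset.card_erase_add_one hℓS
      have hsum : ∑ i ∈ S', q i + q ℓ = ∑ i ∈ S, q i := Finset.sum_erase_add S q hℓS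
      rcases S'.eq_empty_or_nonempty with hS'e | hS'ne
      · -- S = {ℓ}
        have hSsing : S = {ℓ} := by rw [← hins, hS'e]; rfl
        have : q ℓ = K := by rw [hSsing] at hq; simpa using hq
        refine ⟨fun _ => ℓ, fun _ => K, fun i _ => hℓS, fun i _ => le_refl K, ?_⟩
        intro ℓ' hℓ'
        have : ℓ' = ℓ := by
          have := hins ▸ hℓ'
          rw [hS'e] at this; simpa using this
        subst this
        simp [this]
      · -- pick m ∈ S' with K ≤ q m
        obtain ⟨m, hmS', hm⟩ : ∃ m ∈ S', K ≤ q m := by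
          apply Finset.exists_le_of_sum_le hS'ne
          rw [Finset.sum_const, smul_eq_mul]
          have : S.card * K = S'.card * K + K := by
            rw [← hcard]; ring
          omega
        have hmℓ : m ≠ ℓ := fun h => hℓS' (h ▸ hmS')
        set q' : Fin n → ℕ := Function.update q m (q m - (K - q ℓ)) with hq'def
        have hq'm : q' m = q m - (K - q ℓ) := by simp [hq'def]
        have hsumS'q : ∑ i ∈ S'.erase m, q i + q m = ∑ i ∈ S', q i :=
          Finset.sum_erase_add S' q hmS'
        have hmulK : S.card * K = S'.card * K + K := by rw [← hcard]; ring
        have hsumq' : ∑ i ∈ S', q' i = S'.card * K := by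
          have h1 : ∑ i ∈ S', q' i = ∑ i ∈ S'.erase m, q i + q' m := by
            rw [← Finset.sum_erase_add S' q' hmS']
            have he : ∑ x ∈ S'.erase m, q' x = ∑ i ∈ S'.erase m, q i := by
              apply Finset.sum_congr rfl
              intro x hx
              have hx' : x ≠ m := Finset.ne_of_mem_erase hx
              simp [hq'def, Function.update_of_ne hx']
            rw [he]
          omega
        obtain ⟨alt', keep', halt', hkeep', heq'⟩ :=
          ih S' (Finset.erase_ssubset hℓS) q' hsumq'
        refine ⟨Function.update alt' ℓ m, Function.update keep' ℓ (q ℓ), ?_, ?_, ?_⟩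
        · intro i hi
          by_cases h : i = ℓ
          · subst h
            simp only [Function.update_self]
            exact Finset.mem_of_mem_erase hmS'
          · rw [Function.update_of_ne h]
            have : i ∈ S' := Finset.mem_erase.mpr ⟨h, hi⟩
            exact Finset.mem_of_mem_erase (halt' i this)
        · intro i hi
          by_cases h : i = ℓ
          · subst h; simpa using hℓ
          · rw [Function.update_of_ne h]
            exact hkeep' i (Finset.mem_erase.mpr ⟨h, hi⟩)
        · intro ℓ' hℓ'
          by_cases h : ℓ' = ℓ
          · subst h
            have hfilt : S.filter (fun k => Function.update alt' ℓ' m k = ℓ') = ∅ := by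
              apply Finset.filter_false_of_mem
              intro k hk
              by_cases hkℓ : k = ℓ'
              · subst hkℓ; simp only [Function.update_self]; exact hmℓ
              · rw [Function.update_of_ne hkℓ]
                intro hcontra
                exact hℓS' (hcontra ▸ halt' k (Finset.mem_erase.mpr ⟨hkℓ, hk⟩))
            rw [hfilt]
            simp
          · have hℓ'S' : ℓ' ∈ S' := Finset.mem_erase.mpr ⟨h, hℓ'⟩
            rw [Function.update_of_ne h]
            -- split the filter over S = insert ℓ S'
            rw [← hins, Finset.filter_insert]
            have hfcongr : S'.filter (fun k => Function.update alt' ℓ m k = ℓ')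
                = S'.filter (fun k => alt' k = ℓ') := by
              apply Finset.filter_congr
              intro k hk
              have : k ≠ ℓ := Finset.ne_of_mem_erase hk
              simp [Function.update_of_ne this]
            have hscongr : ∀ T : Finset (Fin n), T ⊆ S' →
                ∑ k ∈ T, (K - Function.update keep' ℓ (q ℓ) k) = ∑ k ∈ T, (K - keep' k) := by
              intro T hT
              apply Finset.sum_congr rfl
              intro k hk
              have : k ≠ ℓ := Finset.ne_of_mem_erase (hT hk)
              rw [Function.update_of_ne this]
            have hIH := heq' ℓ' hℓ'S'
            by_cases hm' : m = ℓ'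
            · -- alt ℓ = ℓ', so ℓ is in the filter
              have hcond : Function.update alt' ℓ m ℓ = ℓ' := by
                rw [Function.update_self]; exact hm'
              have hℓnot : ℓ ∉ S'.filter (fun k => Function.update alt' ℓ m k = ℓ') :=
                fun hcc => hℓS' (Finset.mem_of_mem_filter ℓ hcc)
              rw [if_pos hcond, Finset.sum_insert hℓnot, hfcongr,
                hscongr _ (Finset.filter_subset _ _), Function.update_self]
              have hq'ℓ' : q' ℓ' = q m - (K - q ℓ) := by
                rw [← hm']; simp [hq'def]
              rw [hq'ℓ'] at hIH
              rw [hm'] at hm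
              rw [hm'] at hIH
              omega
            · have hcond : ¬(Function.update alt' ℓ m ℓ = ℓ') := by
                rw [Function.update_self]; exact hm'
              rw [if_neg hcond, hfcongr, hscongr _ (Finset.filter_subset _ _)]
              have hq'ℓ' : q' ℓ' = q ℓ' := by
                exact Function.update_of_ne (fun hh => hm' hh.symm) _ q
              rw [hq'ℓ'] at hIH
              exact hIH

theorem alias_sampling_exists
    (n K : ℕ) (hn : 0 < n) (hK : 0 < K)
    (q : Fin n → ℕ) (hq : ∑ i, q i = n * K) :
    ∃ (alt : Fin n → Fin n) (keep : Fin n → ℕ),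
      (∀ i, keep i ≤ K) ∧
      ∀ ℓ : Fin n,
        keep ℓ + ∑ k ∈ Finset.univ.filter (fun k => alt k = ℓ), (K - keep k) = q ℓ := by
  obtain ⟨alt, keep, _, hkeep, heq⟩ :=
    alias_aux n K hK Finset.univ q (by simpa using hq)
  exact ⟨alt, keep, fun i => hkeep i (Finset.mem_univ i),
    fun ℓ => heq ℓ (Finset.mem_univ ℓ)⟩
end

section
/- Let A, B : Matrix (Fin n) (Fin n) ℂ be Hermitian matrices. Then, with respect to the ℓ²-operator norm, ‖exp(Complex.I • A) − exp(Complex.I • B)‖ ≤ ‖A − B‖. (This is the first inequality of Eq. (A2): the error in the eigenphase unitary e^{i arccos(H/λ)} is at most the error in the generator.) -/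
open scoped Matrix.Norms.L2Operator
open Matrix

open NormedSpace in
lemma exp_skew_unitary {n : ℕ} (S : Matrix (Fin n) (Fin n) ℂ) (hS : Sᴴ = -S) :
    exp S ∈ unitary (Matrix (Fin n) (Fin n) ℂ) := by
  have hc : Commute (-S) S := (Commute.refl S).neg_left
  constructor
  · show (exp S)ᴴ * exp S = 1
    rw [← Matrix.exp_conjTranspose, hS, ← Matrix.exp_add_of_commute (-S) S hc,
      neg_add_cancel, NormedSpace.exp_zero]
  · show exp S * (exp S)ᴴ = 1
    rw [← Matrix.exp_conjTranspose, hS, ← Matrix.exp_add_of_commute S (-S) hc.symm,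
      add_neg_cancel, NormedSpace.exp_zero]

open NormedSpace in
theorem exp_hermitian_perturbation_bound
    {n : ℕ} (A B : Matrix (Fin n) (Fin n) ℂ)
    (hA : A.IsHermitian) (hB : B.IsHermitian) :
    ‖NormedSpace.exp (Complex.I • A) - NormedSpace.exp (Complex.I • B)‖ ≤ ‖A - B‖ := by
  set M := Complex.I • A with hM
  set N := Complex.I • B with hN
  -- skewness
  have skew : ∀ (t : ℝ) (X : Matrix (Fin n) (Fin n) ℂ), X.IsHermitian →
      (t • (Complex.I • X))ᴴ = -(t • (Complex.I • X)) := by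
    intro t X hX
    have : t • (Complex.I • X) = ((t : ℂ) * Complex.I) • X := by
      rw [← smul_assoc, Complex.real_smul]
    rw [this, Matrix.conjTranspose_smul, hX.eq]
    rw [← neg_smul]
    congr 1
    simp [Complex.ext_iff]
  -- the interpolating function
  set f : ℝ → Matrix (Fin n) (Fin n) ℂ :=
    fun t => exp (t • M) * exp ((1 - t) • N) with hf
  have hexp : ∀ (t : ℝ) (X : Matrix (Fin n) (Fin n) ℂ),
      HasDerivAt (fun u : ℝ => exp (u • X)) (exp (t • X) * X) t := by
    intro t X
    have := hasDerivAt_exp_smul_const (𝕂 := ℝ) X t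
    exact this
  have hderiv : ∀ t : ℝ,
      HasDerivAt f (exp (t • M) * (M - N) * exp ((1 - t) • N)) t := by
    intro t
    have h1 : HasDerivAt (fun u : ℝ => exp (u • M)) (exp (t • M) * M) t := hexp t M
    have hin : HasDerivAt (fun u : ℝ => 1 - u) (-1) t := by
      simpa using (hasDerivAt_id t).const_sub 1
    have h2 : HasDerivAt (fun u : ℝ => exp ((1 - u) • N))
        (-(exp ((1 - t) • N) * N)) t := by
      have := (hexp (1 - t) N).comp_const_sub 1 t
      simpa using this
    have := h1.mul h2
    refine this.congr_deriv ?_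
    have hcomm : exp ((1 - t) • N) * N = N * exp ((1 - t) • N) :=
      (((Commute.refl N).smul_right ((1 - t) : ℝ)).exp_right).symm.eq
    rw [mul_neg, hcomm]
    noncomm_ring
  -- norm bound on the derivative
  have hbound : ∀ t : ℝ, ‖exp (t • M) * (M - N) * exp ((1 - t) • N)‖ ≤ ‖A - B‖ := by
    intro t
    have hU : exp (t • M) ∈ unitary (Matrix (Fin n) (Fin n) ℂ) :=
      exp_skew_unitary _ (skew t A hA)
    have hV : exp ((1 - t) • N) ∈ unitary (Matrix (Fin n) (Fin n) ℂ) :=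
      exp_skew_unitary _ (skew (1 - t) B hB)
    calc ‖exp (t • M) * (M - N) * exp ((1 - t) • N)‖
        = ‖exp (t • M) * (M - N)‖ := CStarRing.norm_mul_mem_unitary _ hV
      _ = ‖M - N‖ := CStarRing.norm_mem_unitary_mul _ hU
      _ = ‖A - B‖ := by
          rw [hM, hN, ← smul_sub, norm_smul]
          simp
      _ ≤ ‖A - B‖ := le_rfl
  have key : ‖f 1 - f 0‖ ≤ ‖A - B‖ := by
    apply norm_image_sub_le_of_norm_deriv_le_segment_01'
      (f' := fun t => exp (t • M) * (M - N) * exp ((1 - t) • N))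
    · intro t _
      exact (hderiv t).hasDerivWithinAt
    · intro t _
      exact hbound t
  simpa [hf, NormedSpace.exp_zero] using key
end

section
/- Let λ, h, ε be real numbers and L a natural number with 0 < λ, 0 ≤ h < λ, 0 < ε, and 0 < L, and define δ := ε * λ * (1 − h²/λ²) / ((1 + ε²) * L). Then h + L * δ < λ and (L * δ / λ) / Real.sqrt (1 − ((h + L * δ)/λ)²) ≤ ε. (This is the content of Eqs. (A8)–(A9): the choice δ = ελ(1 − ‖H‖²/λ²)/((1+ε²)L) solves the inequality ε ≥ (Lδ/λ)[1 − ((‖H‖+Lδ)/λ)²]^{−1/2}, so coefficient errors of size δ keep the eigenphase error below ε.) -/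
theorem delta_choice_controls_phase_error
    (lam h ε : ℝ) (L : ℕ)
    (hlam : 0 < lam) (hh0 : 0 ≤ h) (hh : h < lam) (hε : 0 < ε) (hL : 0 < L) :
    let δ : ℝ := ε * lam * (1 - h ^ 2 / lam ^ 2) / ((1 + ε ^ 2) * L)
    h + L * δ < lam ∧
    (L * δ / lam) / Real.sqrt (1 - ((h + L * δ) / lam) ^ 2) ≤ ε := by
  intro δ
  have hLpos : (0:ℝ) < L := by exact_mod_cast hL
  have hεsq : (0:ℝ) < 1 + ε ^ 2 := by positivity
  have hA : (L:ℝ) * δ = ε * lam * (1 - h ^ 2 / lam ^ 2) / (1 + ε ^ 2) := by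
    show (L:ℝ) * (ε * lam * (1 - h ^ 2 / lam ^ 2) / ((1 + ε ^ 2) * L)) = _
    field_simp
  set A : ℝ := (L:ℝ) * δ with hAdef
  have hApos : 0 ≤ A := by
    rw [hA]
    have : 0 ≤ 1 - h ^ 2 / lam ^ 2 := by
      rw [sub_nonneg, div_le_one (by positivity)]
      nlinarith
    positivity
  have h1 : h + A < lam := by
    rw [hA]
    have key : ε * lam * (1 - h ^ 2 / lam ^ 2) / (1 + ε ^ 2) < lam - h := by
      rw [div_lt_iff₀ hεsq]
      have key2 : ε * lam * (1 - h ^ 2 / lam ^ 2) = ε * (lam ^ 2 - h ^ 2) / lam := by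
        field_simp
      rw [key2, div_lt_iff₀ hlam]
      have hbr : 0 < (1 + ε ^ 2) * lam - ε * (lam + h) := by
        nlinarith [sq_nonneg (1 - ε), mul_lt_mul_of_pos_left hh hε]
      nlinarith [mul_pos (sub_pos.mpr hh) hbr]
    linarith
  refine ⟨h1, ?_⟩
  have hS : 0 < 1 - ((h + A) / lam) ^ 2 := by
    have h2 : (h + A) / lam < 1 := (div_lt_one hlam).mpr h1
    have h3 : 0 ≤ (h + A) / lam := by positivity
    nlinarith
  have hsqrt : Real.sqrt (1 - ((h + A) / lam) ^ 2) = Real.sqrt (1 - ((h + A) / lam) ^ 2) := rfl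
  rw [div_le_iff₀ (Real.sqrt_pos.mpr hS)]
  have hεs : ε * Real.sqrt (1 - ((h + A) / lam) ^ 2)
      = Real.sqrt (ε ^ 2 * (1 - ((h + A) / lam) ^ 2)) := by
    rw [Real.sqrt_mul (by positivity), Real.sqrt_sq hε.le]
  rw [hεs]
  rw [show A / lam = Real.sqrt ((A / lam) ^ 2) from (Real.sqrt_sq (by positivity)).symm]
  apply Real.sqrt_le_sqrt
  -- key polynomial inequality
  have hl0 : lam ≠ 0 := hlam.ne'
  have hε0 : (1 + ε ^ 2) ≠ 0 := hεsq.ne'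
  rw [hA]
  have expand : ε ^ 2 * (1 - ((h + ε * lam * (1 - h ^ 2 / lam ^ 2) / (1 + ε ^ 2)) / lam) ^ 2)
      - (ε * lam * (1 - h ^ 2 / lam ^ 2) / (1 + ε ^ 2) / lam) ^ 2
      = ε ^ 2 * (1 - h ^ 2 / lam ^ 2) * (ε - h / lam) ^ 2 / (1 + ε ^ 2) := by
    field_simp
    ring
  have ht2 : (0:ℝ) ≤ 1 - h ^ 2 / lam ^ 2 := by
    rw [sub_nonneg, div_le_one (by positivity : (0:ℝ) < lam ^ 2)]; nlinarith
  have hnn : 0 ≤ ε ^ 2 * (1 - h ^ 2 / lam ^ 2) * (ε - h / lam) ^ 2 / (1 + ε ^ 2) := by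
    positivity
  linarith [expand, hnn]
end
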